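/- Let K be a nonempty convex compact subset of a Hausdorff locally convex topological vector space and let F be an abelian semigroup of continuous affine maps K → K. If p ∈ K belongs to f(K) for every f ∈ co(F), then p is a common fixed point: f(p) = p for all f ∈ F. -/

import Mathlib

open Finset

def AffOn {X : Type*} [AddCommGroup X] [Module ℝ X] (K : Set X) (f : K → K) : Prop :=
  ∀ (x y : K) (t : ℝ), 0 ≤ t → t ≤ 1 →
    ∀ h : t • (x : X) + (1 - t) • (y : X) ∈ K,
      (f ⟨_, h⟩ : X) = t • (f x : X) + (1 - t) • (f y : X)

def Co {X : Type*} [AddCommGroup X] [Module ℝ X] (K : Set X) (F : Set (K → K)) :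
    Set (K → K) :=
  {f | ∃ (n : ℕ) (α : Fin n → ℝ) (g : Fin n → (K → K)),
      (∀ i, g i ∈ F) ∧ (∀ i, 0 ≤ α i) ∧ (∑ i, α i) = 1 ∧
      ∀ x, (f x : X) = ∑ i, α i • ((g i) x : X)}

/-- An `AffOn` map preserves arbitrary finite convex combinations. -/
lemma affOn_sum {X : Type*} [AddCommGroup X] [Module ℝ X] {K : Set X}
    (hconv : Convex ℝ K) (f : K → K) (hf : AffOn K f) :
    ∀ (n : ℕ) (α : Fin n → ℝ) (x : Fin n → K), (∀ i, 0 ≤ α i) → (∑ i, α i) = 1 →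
      ∀ h : (∑ i, α i • (x i : X)) ∈ K,
        (f ⟨_, h⟩ : X) = ∑ i, α i • (f (x i) : X) := by
  intro n
  induction n with
  | zero =>
    intro α x _ hsum
    simp at hsum
  | succ n ih =>
    intro α x hpos hsum h
    rw [Fin.sum_univ_succ] at hsum
    by_cases ht : α 0 = 1
    · have hrest : ∀ i : Fin n, α i.succ = 0 := by
        have h2 : ∑ i : Fin n, α i.succ = 0 := by linarith
        intro i
        have := (Finset.sum_eq_zero_iff_of_nonneg (fun j _ => hpos j.succ)).1 h2 i (by simp)
        exact this
      have hxeq : ∑ i, α i • (x i : X) = (x 0 : X) := by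
        rw [Fin.sum_univ_succ, ht]
        simp [hrest]
      have heq : (⟨∑ i, α i • (x i : X), h⟩ : K) = x 0 := Subtype.ext hxeq
      rw [heq, Fin.sum_univ_succ, ht]
      simp [hrest]
    · have hrestsum : ∑ i : Fin n, α i.succ = 1 - α 0 := by linarith
      have hrestnn : (0:ℝ) ≤ ∑ i : Fin n, α i.succ :=
        Finset.sum_nonneg fun i _ => hpos i.succ
      have ht1 : α 0 < 1 := lt_of_le_of_ne (by linarith) ht
      have hs : (0:ℝ) < 1 - α 0 := by linarith
      set β : Fin n → ℝ := fun i => α i.succ / (1 - α 0) with hβ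
      have hβpos : ∀ i, 0 ≤ β i := fun i => div_nonneg (hpos i.succ) hs.le
      have hβsum : ∑ i, β i = 1 := by
        rw [hβ]
        rw [← Finset.sum_div, hrestsum, div_self hs.ne']
      have hz : ∑ i, β i • (x i.succ : X) ∈ K :=
        hconv.sum_mem (fun i _ => hβpos i) hβsum (fun i _ => (x i.succ).2)
      have hsmul : ∀ i : Fin n, (1 - α 0) • (β i • (x i.succ : X)) = α i.succ • (x i.succ : X) := by
        intro i
        rw [smul_smul, hβ]
        congr 1
        field_simp
      have key : ∑ i : Fin (n+1), α i • (x i : X)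
          = α 0 • (x 0 : X) + (1 - α 0) • (∑ i, β i • (x i.succ : X)) := by
        rw [Fin.sum_univ_succ, Finset.smul_sum]
        exact congrArg (HAdd.hAdd _) (Finset.sum_congr rfl fun i _ => (hsmul i).symm)
      have h' : α 0 • ((x 0 : K) : X) + (1 - α 0) • ((⟨_, hz⟩ : K) : X) ∈ K := by
        rw [← key]; exact h
      have heq : (⟨∑ i, α i • (x i : X), h⟩ : K)
          = ⟨α 0 • ((x 0 : K) : X) + (1 - α 0) • ((⟨_, hz⟩ : K) : X), h'⟩ :=
        Subtype.ext key
      rw [heq, hf (x 0) ⟨_, hz⟩ (α 0) (hpos 0) ht1.le h']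
      have hih := ih β (fun i => x i.succ) hβpos hβsum hz
      rw [hih, Fin.sum_univ_succ, Finset.smul_sum]
      congr 1
      refine Finset.sum_congr rfl fun i _ => ?_
      rw [smul_smul, hβ]
      congr 1
      field_simp

theorem stmt6 {X : Type*} [AddCommGroup X] [Module ℝ X] [TopologicalSpace X]
    [IsTopologicalAddGroup X] [ContinuousSMul ℝ X] [T2Space X] [LocallyConvexSpace ℝ X]
    (K : Set X) (hne : K.Nonempty) (hconv : Convex ℝ K) (hcomp : IsCompact K)
    (F : Set (K → K)) (hid : id ∈ F)
    (hF : ∀ f ∈ F, Continuous f ∧ AffOn K f)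
    (hclosed : ∀ f ∈ F, ∀ g ∈ F, f ∘ g ∈ F)
    (habel : ∀ f ∈ F, ∀ g ∈ F, f ∘ g = g ∘ f)
    (p : K) (hp : ∀ f ∈ Co K F, p ∈ Set.range f) :
    ∀ f ∈ F, f p = p := by
  intro f hf
  -- iterates of f stay in F
  have hiter : ∀ k : ℕ, f^[k] ∈ F := by
    intro k
    induction k with
    | zero => exact hid
    | succ k ihk =>
      rw [Function.iterate_succ']
      exact hclosed f hf _ ihk
  -- Cesàro averages
  have hmem : ∀ (n : ℕ) (x : K),
      (∑ i : Fin (n+1), ((n:ℝ)+1)⁻¹ • ((f^[(i:ℕ)] x : K) : X)) ∈ K := by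
    intro n x
    have hpos : (0:ℝ) < (n:ℝ)+1 := by positivity
    refine hconv.sum_mem (fun i _ => by positivity) ?_ (fun i _ => (f^[(i:ℕ)] x).2)
    rw [Finset.sum_const, Finset.card_univ, Fintype.card_fin, nsmul_eq_mul]
    push_cast
    field_simp
  set g : ℕ → (K → K) := fun n x => ⟨_, hmem n x⟩ with hg
  have hgco : ∀ n, g n ∈ Co K F := by
    intro n
    exact ⟨n+1, fun _ => ((n:ℝ)+1)⁻¹, fun i => f^[(i:ℕ)],
      fun i => hiter _, fun i => by positivity,
      by rw [Finset.sum_const, Finset.card_univ, Fintype.card_fin, nsmul_eq_mul]; push_cast; field_simp,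
      fun x => rfl⟩
  -- the key identity: f p - p = (n+1)⁻¹ • (f^[n+1] x - x) for some x ∈ K
  have hkey : ∀ n : ℕ, ∃ x : K,
      (f p : X) - (p : X) = ((n:ℝ)+1)⁻¹ • (((f^[n+1] x : K) : X) - (x : X)) := by
    intro n
    obtain ⟨x, hx⟩ := hp (g n) (hgco n)
    refine ⟨x, ?_⟩
    have hpx : (p : X) = ∑ i : Fin (n+1), ((n:ℝ)+1)⁻¹ • ((f^[(i:ℕ)] x : K) : X) := by
      rw [← hx]
    have hpe : p = (⟨_, hmem n x⟩ : K) := Subtype.ext hpx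
    have hfp : (f p : X) = ∑ i : Fin (n+1), ((n:ℝ)+1)⁻¹ • ((f (f^[(i:ℕ)] x) : K) : X) := by
      rw [hpe]
      exact affOn_sum hconv f (hF f hf).2 (n+1) (fun _ => ((n:ℝ)+1)⁻¹)
        (fun i => f^[(i:ℕ)] x) (fun i => by positivity)
        (by rw [Finset.sum_const, Finset.card_univ, Fintype.card_fin, nsmul_eq_mul]; push_cast; field_simp)
        (hmem n x)
    have hstep : ∀ i : Fin (n+1), (f (f^[(i:ℕ)] x) : X) = ((f^[(i:ℕ)+1] x : K) : X) := by
      intro i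
      rw [Function.iterate_succ_apply']
    rw [hfp, hpx]
    rw [← Finset.smul_sum, ← Finset.smul_sum, ← smul_sub]
    congr 1
    have h1 : ∑ i : Fin (n+1), ((f (f^[(i:ℕ)] x) : K) : X)
        = ∑ i : Fin (n+1), ((f^[(i:ℕ)+1] x : K) : X) :=
      Finset.sum_congr rfl fun i _ => hstep i
    rw [h1, Fin.sum_univ_eq_sum_range (fun i => ((f^[i+1] x : K) : X)) (n+1),
      Fin.sum_univ_eq_sum_range (fun i => ((f^[i] x : K) : X)) (n+1),
      Finset.sum_range_succ (fun i => ((f^[i+1] x : K) : X)) n,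
      Finset.sum_range_succ' (fun i => ((f^[i] x : K) : X)) n]
    simp only [Function.iterate_zero, id_eq]
    abel
  -- the compact set of differences
  set S : Set X := (fun q : X × X => q.1 - q.2) '' (K ×ˢ K) with hS
  have hScomp : IsCompact S := (hcomp.prod hcomp).image (continuous_fst.sub continuous_snd)
  -- transfer to the canonical uniformity to get von Neumann boundedness
  letI : UniformSpace X := IsTopologicalAddGroup.rightUniformSpace X
  haveI : IsUniformAddGroup X := isUniformAddGroup_of_addCommGroup
  have hSbdd : Bornology.IsVonNBounded ℝ S := hScomp.totallyBounded.isVonNBounded ℝ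
  have hvU : ∀ U ∈ nhds (0 : X), (f p : X) - (p : X) ∈ U := by
    intro U hU
    obtain ⟨r, hr⟩ := absorbs_iff_norm.1 (hSbdd hU)
    obtain ⟨n, hn⟩ := exists_nat_ge r
    obtain ⟨x, hx⟩ := hkey n
    have hwS : ((f^[n+1] x : K) : X) - (x : X) ∈ S :=
      ⟨((((f^[n+1] x : K) : X)), (x : X)), ⟨(f^[n+1] x).2, x.2⟩, rfl⟩
    have hnr : r ≤ ‖((n:ℝ)+1)‖ := by
      rw [Real.norm_eq_abs, abs_of_nonneg (by positivity)]
      linarith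
    have hsub := hr ((n:ℝ)+1) hnr hwS
    obtain ⟨u, hu, huw⟩ := hsub
    have hne0 : ((n:ℝ)+1) ≠ 0 := by positivity
    have huw' : ((n:ℝ)+1) • u = ((f^[n+1] x : K) : X) - (x : X) := huw
    have : (f p : X) - (p : X) = u := by
      rw [hx, ← huw', smul_smul, inv_mul_cancel₀ hne0, one_smul]
    rwa [this]
  -- conclude using T1
  have hv0 : (f p : X) - (p : X) = 0 := by
    by_contra hvne
    have : ({(f p : X) - (p : X)}ᶜ : Set X) ∈ nhds (0 : X) :=
      compl_singleton_mem_nhds (fun h => hvne h.symm)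
    exact (hvU _ this) rfl
  exact Subtype.ext (sub_eq_zero.1 hv0)
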